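/- Let L_1 be the 5×5 real symmetric tridiagonal matrix with zero diagonal and superdiagonal entries (1, √(3/2), √(3/2), 1), and let L_2 := diag(0, −1, −1, −1, −1). For every nonzero integer k, the matrix −i k L_1 + L_2 ∈ ℂ^{5×5} has exactly one real eigenvalue λ_0(k), this eigenvalue satisfies −5/8 < λ_0(k) < 0, λ_0 is strictly decreasing with respect to |k| (i.e. λ_0(k') < λ_0(k) whenever |k'| > |k| ≥ 1), and λ_0(k) → −5/8 as |k| → ∞. -/

import Mathlib

open Matrix Filter

/-- The symmetric tridiagonal matrix `L₁` of the 5-velocity discrete BGK model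
(entries over `ℂ`, superdiagonal `(1, √(3/2), √(3/2), 1)`). -/
noncomputable def L1five : Matrix (Fin 5) (Fin 5) ℂ :=
  !![0, 1, 0, 0, 0;
     1, 0, (Real.sqrt (3/2) : ℂ), 0, 0;
     0, (Real.sqrt (3/2) : ℂ), 0, (Real.sqrt (3/2) : ℂ), 0;
     0, 0, (Real.sqrt (3/2) : ℂ), 0, 1;
     0, 0, 0, 1, 0]

/-- The collision matrix `L₂ = diag(0,-1,-1,-1,-1)` of the 5-velocity model. -/
noncomputable def L2five : Matrix (Fin 5) (Fin 5) ℂ :=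
  Matrix.diagonal ![0, -1, -1, -1, -1]

/-- The `k`-th Fourier-mode matrix `-i k L₁ + L₂` of the 5-velocity BGK model. -/
noncomputable def modeMatrix (k : ℤ) : Matrix (Fin 5) (Fin 5) ℂ :=
  (-(k : ℂ) * Complex.I) • L1five + L2five

/-- The (real) characteristic function: `gBGK t l = l(l+1)⁴ + t(l+1)²(5l+1) + t²(4l+5/2)`. -/
noncomputable def gBGK (t l : ℝ) : ℝ :=
  l*(l+1)^4 + t*(l+1)^2*(5*l+1) + t^2*(4*l+5/2)

lemma gBGK_strictMono {t : ℝ} (ht : 1 ≤ t) : StrictMono (gBGK t) := by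
  have key : ∀ x : ℝ, HasDerivAt (gBGK t)
      (5*x^4+16*x^3+18*x^2+8*x+1 + t*(15*x^2+22*x+7) + 4*t^2) x := by
    intro x
    have h1 : HasDerivAt (fun l : ℝ => l+1) 1 x := (hasDerivAt_id x).add_const 1
    have hA := (hasDerivAt_id x).mul (h1.pow 4)
    have hB := ((h1.pow 2).mul (((hasDerivAt_id x).const_mul (5:ℝ)).add_const 1)).const_mul t
    have hC := ((((hasDerivAt_id x).const_mul (4:ℝ)).add_const (5/2 : ℝ)).const_mul (t^2))
    have H := (hA.add hB).add hC
    have heq : gBGK t = fun l : ℝ =>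
        id l * (l+1)^4 + t * ((l+1)^2 * (5 * id l + 1)) + t^2 * (4 * id l + 5/2) := by
      funext l; simp only [gBGK, id_eq]; ring
    rw [heq]
    refine (H.congr_deriv ?_).congr_of_eventuallyEq (Filter.Eventually.of_forall fun l => ?_)
    · simp only [Pi.pow_apply, id_eq]; push_cast; ring
    · rfl
  apply strictMono_of_deriv_pos
  intro x
  rw [(key x).deriv]
  have hq : (0:ℝ) < 5*x^4+16*x^3+33*x^2+30*x+12 := by
    nlinarith [sq_nonneg (x^2 + 8/5*x + 1), sq_nonneg (x + 35/51)]
  have hb : (0:ℝ) ≤ 15*x^2+22*x+15 := by nlinarith [sq_nonneg (x + 11/15)]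
  nlinarith [hq, mul_nonneg hb (sub_nonneg.2 ht), sq_nonneg (t-1)]

lemma gBGK_exists_root {t : ℝ} (ht : 1 ≤ t) :
    ∃ l ∈ Set.Ioo (-(5:ℝ)/8) 0, gBGK t l = 0 := by
  have hc : ContinuousOn (gBGK t) (Set.Icc (-(5:ℝ)/8) 0) := by
    apply Continuous.continuousOn
    unfold gBGK
    fun_prop
  have h1 : gBGK t (-(5:ℝ)/8) < 0 := by
    unfold gBGK; nlinarith [sq_nonneg t]
  have h2 : (0:ℝ) < gBGK t 0 := by
    unfold gBGK; nlinarith [sq_nonneg t]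
  have := intermediate_value_Ioo (by norm_num : (-(5:ℝ)/8) ≤ 0) hc
  obtain ⟨l, hl, hl0⟩ := this (Set.mem_Ioo.2 ⟨h1, h2⟩)
  exact ⟨l, hl, hl0⟩

/-- The distinguished real eigenvalue. -/
noncomputable def lam0BGK (k : ℤ) : ℝ :=
  if h : (1:ℝ) ≤ ((k:ℝ))^2 then (gBGK_exists_root h).choose else 0

lemma lam0BGK_spec {k : ℤ} (hk : (1:ℝ) ≤ ((k:ℝ))^2) :
    lam0BGK k ∈ Set.Ioo (-(5:ℝ)/8) 0 ∧ gBGK ((k:ℝ)^2) (lam0BGK k) = 0 := by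
  rw [lam0BGK, dif_pos hk]
  exact ⟨(gBGK_exists_root hk).choose_spec.1, (gBGK_exists_root hk).choose_spec.2⟩

lemma one_le_sq {k : ℤ} (hk : k ≠ 0) : (1:ℝ) ≤ ((k:ℝ))^2 := by
  have h1 : (1:ℤ) ≤ |k| := Int.one_le_abs hk
  have h2 : (1:ℝ) ≤ |(k:ℝ)| := by
    rw [← Int.cast_abs]; exact_mod_cast h1
  nlinarith [h2, sq_abs (k:ℝ)]

set_option maxHeartbeats 1600000 in
lemma det_mode (k : ℤ) (r : ℝ) :
    (algebraMap ℂ (Matrix (Fin 5) (Fin 5) ℂ) (r:ℂ) - modeMatrix k).det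
      = ((gBGK ((k:ℝ)^2) r : ℝ) : ℂ) := by
  have hM : algebraMap ℂ (Matrix (Fin 5) (Fin 5) ℂ) (r:ℂ) - modeMatrix k =
      !![(r:ℂ), (k:ℂ)*Complex.I, 0, 0, 0;
        (k:ℂ)*Complex.I, (r:ℂ)+1, (k:ℂ)*Complex.I*((Real.sqrt (3/2):ℂ)), 0, 0;
        0, (k:ℂ)*Complex.I*((Real.sqrt (3/2):ℂ)), (r:ℂ)+1, (k:ℂ)*Complex.I*((Real.sqrt (3/2):ℂ)), 0;
        0, 0, (k:ℂ)*Complex.I*((Real.sqrt (3/2):ℂ)), (r:ℂ)+1, (k:ℂ)*Complex.I;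
        0, 0, 0, (k:ℂ)*Complex.I, (r:ℂ)+1] := by
    ext i j
    fin_cases i <;> fin_cases j <;>
      simp [modeMatrix, L1five, L2five, Matrix.algebraMap_matrix_apply,
        Matrix.diagonal, Matrix.vecHead, Matrix.vecTail, Matrix.sub_apply,
        Matrix.add_apply, Matrix.smul_apply] <;> first | decide | ring
  rw [hM]
  have hs : ((Real.sqrt (3/2):ℂ))^2 = (3/2 : ℂ) := by
    norm_cast
    rw [Real.sq_sqrt] <;> norm_num
  have hI : Complex.I^2 = -1 := Complex.I_sq
  set s : ℂ := ((Real.sqrt (3/2):ℂ)) with hsdef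
  set K : ℂ := (k:ℂ) with hKdef
  set l : ℂ := (r:ℂ) with hldef
  unfold gBGK
  simp [Matrix.det_succ_row_zero, Fin.sum_univ_succ, Fin.succAbove]
  push_cast
  linear_combination
    (K^4 + 2*l*K^2 + 2*l*K^4 + 4*l^2*K^2 + 2*l^3*K^2) * hs
    + (-K^2 - K^4 - K^4*s^2 + K^4*Complex.I^2 + K^4*Complex.I^2*s^2
       - 4*l*K^2 - 2*l*K^2*s^2 - l*K^4 - 2*l*K^4*s^2
       + l*K^4*Complex.I^2 + 2*l*K^4*Complex.I^2*s^2
       - 5*l^2*K^2 - 4*l^2*K^2*s^2 - 2*l^3*K^2 - 2*l^3*K^2*s^2) * hI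

lemma mem_spectrum_iff_gBGK (k : ℤ) (r : ℝ) :
    (r:ℂ) ∈ spectrum ℂ (modeMatrix k) ↔ gBGK ((k:ℝ)^2) r = 0 := by
  rw [spectrum.mem_iff, Matrix.isUnit_iff_isUnit_det, det_mode, isUnit_iff_ne_zero]
  simp [Complex.ofReal_eq_zero]

lemma root_decreasing {t t' l l' : ℝ} (ht : 1 ≤ t) (htt : t < t')
    (hlo : -(5:ℝ)/8 < l) (hhi : l < 0)
    (h0 : gBGK t l = 0) (h0' : gBGK t' l' = 0) : l' < l := by
  have ht' : 1 ≤ t' := le_of_lt (lt_of_le_of_lt ht htt)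
  have hkey : t * gBGK t' l = (t' - t) * ((4*l+5/2)*(t*t') - l*(l+1)^4) := by
    unfold gBGK at h0 ⊢
    linear_combination t' * h0
  have ha : (0:ℝ) < 4*l + 5/2 := by linarith
  have htpos : (0:ℝ) < t := by linarith
  have ht'pos : (0:ℝ) < t' := by linarith
  have hc : (0:ℝ) < -(l*(l+1)^4) := by
    have hl1 : (0:ℝ) < l + 1 := by linarith
    have : (0:ℝ) < (l+1)^4 := by positivity
    nlinarith
  have hpos : 0 < gBGK t' l := by
    have h2 : 0 < (t' - t) * ((4*l+5/2)*(t*t') - l*(l+1)^4) := by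
      apply mul_pos (by linarith)
      nlinarith [mul_pos ha (mul_pos htpos ht'pos)]
    rw [← hkey] at h2
    nlinarith [h2]
  have := (gBGK_strictMono ht').lt_iff_lt (a := l') (b := l)
  rw [h0'] at this
  exact this.mp hpos

lemma gBGK_pos_of_large {t δ : ℝ} (hδ0 : 0 < δ) (hδ : δ ≤ 1/16) (ht : 2/δ ≤ t) :
    0 < gBGK t (-(5:ℝ)/8 + δ) := by
  have ht2 : 2 ≤ δ * t := by
    rw [div_le_iff₀ hδ0] at ht; linarith [ht]
  have ht32 : (32:ℝ) ≤ t := by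
    nlinarith
  have htnn : (0:ℝ) ≤ t := by linarith
  have hb1 : (0:ℝ) ≤ (-5/8+δ+1)^2 * (5*(-5/8+δ)+1) + 1 := by
    nlinarith [sq_nonneg δ, mul_nonneg hδ0.le hδ0.le,
      mul_nonneg (mul_nonneg hδ0.le hδ0.le) hδ0.le,
      mul_nonneg hδ0.le (sub_nonneg.2 hδ)]
  have hc1 : (0:ℝ) ≤ (-5/8+δ)*(-5/8+δ+1)^4 + 1 := by
    nlinarith [sq_nonneg δ, mul_nonneg hδ0.le hδ0.le,
      mul_nonneg (mul_nonneg hδ0.le hδ0.le) hδ0.le,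
      mul_nonneg (mul_nonneg (mul_nonneg hδ0.le hδ0.le) hδ0.le) hδ0.le,
      mul_nonneg (mul_nonneg (mul_nonneg (mul_nonneg hδ0.le hδ0.le) hδ0.le) hδ0.le) hδ0.le,
      mul_nonneg hδ0.le (sub_nonneg.2 hδ)]
  have hA : 8*t ≤ t^2*(4*δ) := by nlinarith [mul_le_mul_of_nonneg_right ht2 htnn]
  unfold gBGK
  nlinarith [mul_nonneg htnn hb1, hc1, hA, ht32]

/-- for every `k ≠ 0`, the matrix `-i k L₁ + L₂` has exactly one real
eigenvalue `λ₀(k)`; it satisfies `-5/8 < λ₀(k) < 0`, is strictly decreasing in `|k|`,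
and `λ₀(k) → -5/8` as `|k| → ∞`. -/
theorem stmt_14 :
    ∃ lam0 : ℤ → ℝ,
      (∀ k : ℤ, k ≠ 0 →
        ((lam0 k : ℂ) ∈ spectrum ℂ (modeMatrix k) ∧
          ∀ r : ℝ, (r : ℂ) ∈ spectrum ℂ (modeMatrix k) → r = lam0 k)) ∧
      (∀ k : ℤ, k ≠ 0 → -5/8 < lam0 k ∧ lam0 k < 0) ∧
      (∀ k k' : ℤ, 1 ≤ |k| → |k| < |k'| → lam0 k' < lam0 k) ∧
      Tendsto (fun k : ℤ => lam0 k) cofinite (nhds (-5/8)) := by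
  refine ⟨lam0BGK, ?_, ?_, ?_, ?_⟩
  · intro k hk
    have hk2 := one_le_sq hk
    obtain ⟨⟨hlo, hhi⟩, hroot⟩ := lam0BGK_spec hk2
    constructor
    · exact (mem_spectrum_iff_gBGK k _).2 hroot
    · intro r hr
      have hr0 := (mem_spectrum_iff_gBGK k r).1 hr
      exact (gBGK_strictMono hk2).injective (hr0.trans hroot.symm)
  · intro k hk
    have hk2 := one_le_sq hk
    obtain ⟨⟨hlo, hhi⟩, _⟩ := lam0BGK_spec hk2
    exact ⟨by linarith, hhi⟩
  · intro k k' hk hkk'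
    have hk0 : k ≠ 0 := by
      intro h; rw [h] at hk; simp at hk
    have hk'0 : k' ≠ 0 := by
      intro h; rw [h] at hkk'; simp at hkk'; omega
    have hk2 := one_le_sq hk0
    have hk'2 := one_le_sq hk'0
    obtain ⟨⟨hlo, hhi⟩, hroot⟩ := lam0BGK_spec hk2
    obtain ⟨_, hroot'⟩ := lam0BGK_spec hk'2
    have htt : ((k:ℝ))^2 < ((k':ℝ))^2 := by
      have h1 : |(k:ℝ)| < |(k':ℝ)| := by
        rw [← Int.cast_abs, ← Int.cast_abs]; exact_mod_cast hkk'
      have h2 : (0:ℝ) ≤ |(k:ℝ)| := abs_nonneg _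
      calc ((k:ℝ))^2 = |(k:ℝ)|^2 := (sq_abs _).symm
        _ < |(k':ℝ)|^2 := by nlinarith
        _ = ((k':ℝ))^2 := sq_abs _
    exact root_decreasing hk2 htt hlo hhi hroot hroot'
  · rw [Metric.tendsto_nhds]
    intro ε hε
    rw [Filter.eventually_cofinite]
    set δ : ℝ := min ε (1/16) with hδdef
    have hδ0 : 0 < δ := lt_min hε (by norm_num)
    have hδ16 : δ ≤ 1/16 := min_le_right _ _
    have hδε : δ ≤ ε := min_le_left _ _
    set T : ℝ := 2/δ with hTdef
    apply Set.Finite.subset (Set.finite_Icc (-⌈T⌉) ⌈T⌉)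
    intro k hk
    simp only [Set.mem_setOf_eq] at hk
    by_contra hk'
    apply hk
    -- k outside Icc, so |k| large
    rw [Set.mem_Icc, not_and_or, not_le, not_le] at hk'
    have hTpos : 0 < T := by positivity
    have hT32 : (32:ℝ) ≤ T := by
      rw [hTdef]
      rw [le_div_iff₀ hδ0]
      linarith [hδ16]
    have hceil0 : (0:ℤ) < ⌈T⌉ := Int.ceil_pos.mpr hTpos
    have habs : T ≤ ((|k|:ℤ):ℝ) := by
      have hceil : T ≤ (⌈T⌉:ℝ) := Int.le_ceil T
      rcases hk' with h | h
      · have : ⌈T⌉ ≤ |k| := le_abs.mpr (Or.inr (by omega))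
        calc T ≤ (⌈T⌉:ℝ) := hceil
          _ ≤ ((|k|:ℤ):ℝ) := by exact_mod_cast this
      · have : ⌈T⌉ ≤ |k| := le_abs.mpr (Or.inl (by omega))
        calc T ≤ (⌈T⌉:ℝ) := hceil
          _ ≤ ((|k|:ℤ):ℝ) := by exact_mod_cast this
    have hk0 : k ≠ 0 := by
      intro h
      rw [h] at habs
      simp at habs
      linarith
    have hk2 := one_le_sq hk0
    obtain ⟨⟨hlo, hhi⟩, hroot⟩ := lam0BGK_spec hk2
    -- (k:ℝ)^2 ≥ |k| ≥ T
    have hsq : T ≤ ((k:ℝ))^2 := by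
      have h1 : ((|k|:ℤ):ℝ) ≤ ((|k|:ℤ):ℝ)^2 := by
        have : (1:ℝ) ≤ ((|k|:ℤ):ℝ) := by
          have : (1:ℤ) ≤ |k| := Int.one_le_abs hk0
          exact_mod_cast this
        nlinarith
      have h2 : ((|k|:ℤ):ℝ)^2 = ((k:ℝ))^2 := by
        rw [Int.cast_abs, sq_abs]
      linarith [habs, h1, h2 ▸ h1]
    rw [hTdef] at hsq
    have hpos := gBGK_pos_of_large hδ0 hδ16 hsq
    have hlt : lam0BGK k < -(5:ℝ)/8 + δ := by
      have := (gBGK_strictMono hk2).lt_iff_lt (a := lam0BGK k) (b := -(5:ℝ)/8 + δ)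
      apply this.mp
      rw [hroot]
      exact hpos
    rw [Real.dist_eq, abs_lt]
    constructor <;> [linarith; linarith]
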